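/- Let c ∈ ℝ and define ν₂(t) = c for all t. Then for every x > 0, the boundary expression (1/Γ(1/2)²)·∫₀ˣ ν₂(t)·t^{−1/2}(x−t)^{−1/2}·ln(t/x) dt equals −2c·ln 2. -/

import Mathlib

open MeasureTheory Set Real

noncomputable def W (u : ℝ) : ℝ := u ^ (-(1:ℝ)/2) * (1-u) ^ (-(1:ℝ)/2)

lemma W_def (u : ℝ) : W u = u ^ (-(1:ℝ)/2) * (1-u) ^ (-(1:ℝ)/2) := rfl

lemma neg_log_le (v : ℝ) (hv : 0 < v) : -Real.log v ≤ 4 * v ^ (-(1:ℝ)/4) := by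
  have h1 : Real.log (v ^ (-(1:ℝ)/4)) ≤ v ^ (-(1:ℝ)/4) - 1 :=
    Real.log_le_sub_one_of_pos (Real.rpow_pos_of_pos hv _)
  rw [Real.log_rpow hv] at h1
  nlinarith [Real.rpow_pos_of_pos hv (-(1:ℝ)/4)]

lemma pw_bound (v : ℝ) (hv0 : 0 < v) (hv1 : v < 1) :
    v ^ (-(1:ℝ)/2) * |Real.log v| ≤ 4 * v ^ (-(3:ℝ)/4) := by
  rw [abs_of_nonpos (Real.log_nonpos hv0.le hv1.le)]
  have h2 := neg_log_le v hv0
  calc v ^ (-(1:ℝ)/2) * -Real.log v ≤ v ^ (-(1:ℝ)/2) * (4 * v ^ (-(1:ℝ)/4)) :=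
        mul_le_mul_of_nonneg_left h2 (Real.rpow_nonneg hv0.le _)
    _ = 4 * v ^ (-(3:ℝ)/4) := by
        rw [show (4:ℝ) * v ^ (-(3:ℝ)/4) = 4 * (v ^ (-(1:ℝ)/2) * v ^ (-(1:ℝ)/4)) by
          rw [← Real.rpow_add hv0]; norm_num]
        ring

lemma pw_half (v : ℝ) (hv0 : 0 < v) (hv1 : v < 1) : v ^ (-(1:ℝ)/2) ≤ v ^ (-(3:ℝ)/4) :=
  Real.rpow_le_rpow_of_exponent_ge hv0 hv1.le (by norm_num)

lemma half_bound : ((1:ℝ)/2) ^ (-(3:ℝ)/4) ≤ 2 := by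
  have h := Real.rpow_le_rpow_of_exponent_ge (x := (1:ℝ)/2) (by norm_num) (by norm_num)
    (show (-1:ℝ) ≤ -(3:ℝ)/4 by norm_num)
  calc ((1:ℝ)/2) ^ (-(3:ℝ)/4) ≤ ((1:ℝ)/2) ^ (-1:ℝ) := h
    _ = 2 := by rw [Real.rpow_neg_one]; norm_num

lemma base_int : IntegrableOn (fun u : ℝ => u ^ (-(3:ℝ)/4) * (1-u) ^ (-(3:ℝ)/4)) (Ioo 0 1) := by
  have hmeas : ∀ s : Set ℝ, AEStronglyMeasurable (fun u : ℝ => u ^ (-(3:ℝ)/4) * (1-u) ^ (-(3:ℝ)/4))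
      (volume.restrict s) := by
    intro s; apply Measurable.aestronglyMeasurable; fun_prop
  have hsplit : Ioo (0:ℝ) 1 = Ioo 0 (1/2) ∪ Ico (1/2) 1 :=
    (Set.Ioo_union_Ico_eq_Ioo (by norm_num) (by norm_num)).symm
  rw [hsplit]
  apply IntegrableOn.union
  · have hint : IntegrableOn (fun u : ℝ => 2 * u ^ (-(3:ℝ)/4)) (Ioo 0 (1/2)) := by
      apply Integrable.const_mul
      have h := intervalIntegral.intervalIntegrable_rpow' (a := 0) (b := 1/2)
        (r := -(3:ℝ)/4) (by norm_num)
      rwa [intervalIntegrable_iff_integrableOn_Ioo_of_le (by norm_num)] at h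
    apply Integrable.mono hint (hmeas _)
    filter_upwards [ae_restrict_mem measurableSet_Ioo] with u hu
    obtain ⟨h0, h1⟩ := hu
    have hu1 : (0:ℝ) < 1 - u := by linarith
    rw [Real.norm_eq_abs, Real.norm_eq_abs, abs_of_nonneg (by positivity), abs_of_nonneg (by positivity)]
    have hb : (1-u) ^ (-(3:ℝ)/4) ≤ 2 := by
      calc (1-u) ^ (-(3:ℝ)/4) ≤ ((1:ℝ)/2) ^ (-(3:ℝ)/4) :=
            Real.rpow_le_rpow_of_nonpos (by norm_num) (by linarith) (by norm_num)
        _ ≤ 2 := half_bound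
    calc u ^ (-(3:ℝ)/4) * (1-u) ^ (-(3:ℝ)/4) ≤ u ^ (-(3:ℝ)/4) * 2 :=
          mul_le_mul_of_nonneg_left hb (by positivity)
      _ = 2 * u ^ (-(3:ℝ)/4) := by ring
  · rw [integrableOn_Ico_iff_integrableOn_Ioo]
    have hint : IntegrableOn (fun u : ℝ => 2 * (1-u) ^ (-(3:ℝ)/4)) (Ioo (1/2) 1) := by
      apply Integrable.const_mul
      have h := (intervalIntegral.intervalIntegrable_rpow' (a := 0) (b := 1/2)
        (r := -(3:ℝ)/4) (by norm_num)).comp_sub_left 1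
      rw [show (1:ℝ) - 0 = 1 by norm_num, show (1:ℝ) - 1/2 = 1/2 by norm_num] at h
      replace h := h.symm
      rwa [intervalIntegrable_iff_integrableOn_Ioo_of_le (by norm_num)] at h
    apply Integrable.mono hint (hmeas _)
    filter_upwards [ae_restrict_mem measurableSet_Ioo] with u hu
    obtain ⟨h0, h1⟩ := hu
    have hu1 : (0:ℝ) < 1 - u := by linarith
    rw [Real.norm_eq_abs, Real.norm_eq_abs, abs_of_nonneg (by positivity), abs_of_nonneg (by positivity)]
    have hb : u ^ (-(3:ℝ)/4) ≤ 2 := by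
      calc u ^ (-(3:ℝ)/4) ≤ ((1:ℝ)/2) ^ (-(3:ℝ)/4) :=
            Real.rpow_le_rpow_of_nonpos (by norm_num) (by linarith) (by norm_num)
        _ ≤ 2 := half_bound
    calc u ^ (-(3:ℝ)/4) * (1-u) ^ (-(3:ℝ)/4) ≤ 2 * (1-u) ^ (-(3:ℝ)/4) :=
          mul_le_mul_of_nonneg_right hb (by positivity)

lemma int_of_bound {f : ℝ → ℝ} (hm : AEStronglyMeasurable f (volume.restrict (Ioo 0 1)))
    {C : ℝ} (h : ∀ u ∈ Ioo (0:ℝ) 1, |f u| ≤ C * (u ^ (-(3:ℝ)/4) * (1-u) ^ (-(3:ℝ)/4))) :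
    IntegrableOn f (Ioo 0 1) := by
  apply Integrable.mono (base_int.const_mul C) hm
  filter_upwards [ae_restrict_mem measurableSet_Ioo] with u hu
  rw [Real.norm_eq_abs, Real.norm_eq_abs]
  refine (h u hu).trans (le_abs_self _)

lemma int_W : IntegrableOn W (Ioo 0 1) := by
  apply int_of_bound (by unfold W; exact (by fun_prop : Measurable (fun u:ℝ => u ^ (-(1:ℝ)/2) * (1-u) ^ (-(1:ℝ)/2))).aestronglyMeasurable)
  intro u ⟨h0, h1⟩
  have h1' : (0:ℝ) < 1 - u := by linarith
  rw [abs_of_nonneg (by unfold W; positivity), W_def]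
  rw [one_mul]
  exact mul_le_mul (pw_half u h0 h1) (pw_half (1-u) h1' (by linarith)) (by positivity) (by positivity)

lemma meas_W : Measurable W := by
  unfold W; fun_prop

lemma int_Wlog : IntegrableOn (fun u => W u * Real.log u) (Ioo 0 1) := by
  apply int_of_bound ((meas_W.mul Real.measurable_log).aestronglyMeasurable) (C := 4)
  intro u ⟨h0, h1⟩
  have h1' : (0:ℝ) < 1 - u := by linarith
  have e : |W u * Real.log u| = (u ^ (-(1:ℝ)/2) * |Real.log u|) * (1-u) ^ (-(1:ℝ)/2) := by
    rw [abs_mul, W_def, abs_mul,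
      abs_of_nonneg (Real.rpow_nonneg h0.le _), abs_of_nonneg (Real.rpow_nonneg h1'.le _)]
    ring
  show |W u * Real.log u| ≤ _
  rw [e]
  calc (u ^ (-(1:ℝ)/2) * |Real.log u|) * (1-u) ^ (-(1:ℝ)/2)
      ≤ (4 * u ^ (-(3:ℝ)/4)) * (1-u) ^ (-(3:ℝ)/4) :=
        mul_le_mul (pw_bound u h0 h1) (pw_half (1-u) h1' (by linarith)) (by positivity)
          (by positivity)
    _ = 4 * (u ^ (-(3:ℝ)/4) * (1-u) ^ (-(3:ℝ)/4)) := by ring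

lemma int_Wlog' : IntegrableOn (fun u => W u * Real.log (1-u)) (Ioo 0 1) := by
  apply int_of_bound ((meas_W.mul
    (Real.measurable_log.comp (measurable_const.sub measurable_id))).aestronglyMeasurable) (C := 4)
  intro u ⟨h0, h1⟩
  show |W u * Real.log (1-u)| ≤ _
  have h1' : (0:ℝ) < 1 - u := by linarith
  have e : |W u * Real.log (1-u)| = u ^ (-(1:ℝ)/2) * ((1-u) ^ (-(1:ℝ)/2) * |Real.log (1-u)|) := by
    rw [abs_mul, W_def, abs_mul,
      abs_of_nonneg (Real.rpow_nonneg h0.le _), abs_of_nonneg (Real.rpow_nonneg h1'.le _)]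
    ring
  rw [e]
  calc u ^ (-(1:ℝ)/2) * ((1-u) ^ (-(1:ℝ)/2) * |Real.log (1-u)|)
      ≤ u ^ (-(3:ℝ)/4) * (4 * (1-u) ^ (-(3:ℝ)/4)) :=
        mul_le_mul (pw_half u h0 h1) (pw_bound (1-u) h1' (by linarith)) (by positivity)
          (by positivity)
    _ = 4 * (u ^ (-(3:ℝ)/4) * (1-u) ^ (-(3:ℝ)/4)) := by ring

/- substitution helpers -/

lemma img_refl : (fun u : ℝ => 1 - u) '' Ioo 0 1 = Ioo 0 1 := by
  simp [Set.image_const_sub_Ioo]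

lemma refl_eq (g : ℝ → ℝ) :
    ∫ u in Ioo (0:ℝ) 1, g u = ∫ u in Ioo (0:ℝ) 1, g (1-u) := by
  have h := integral_image_eq_integral_abs_deriv_smul (s := Ioo 0 1)
    (f := fun u : ℝ => 1 - u) (f' := fun _ => -1) measurableSet_Ioo
    (fun x _ => ((hasDerivAt_id x).const_sub 1).hasDerivWithinAt)
    (fun a _ b _ h => by dsimp at h; linarith) g
  rw [img_refl] at h
  simpa using h

lemma img_aff : (fun s : ℝ => (1+s)/2) '' Ioo (-1) 1 = Ioo 0 1 := by
  ext u
  constructor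
  · rintro ⟨s, ⟨h1, h2⟩, rfl⟩; exact ⟨by dsimp; linarith, by dsimp; linarith⟩
  · rintro ⟨h1, h2⟩; exact ⟨2*u - 1, ⟨by linarith, by linarith⟩, by ring⟩

lemma aff_deriv (x : ℝ) (s : Set ℝ) : HasDerivWithinAt (fun s : ℝ => (1+s)/2) (1/2) s x :=
  (((hasDerivAt_id x).const_add 1).div_const 2).hasDerivWithinAt

lemma aff_inj : InjOn (fun s : ℝ => (1+s)/2) (Ioo (-1) 1) :=
  fun a _ b _ h => by dsimp at h; linarith

lemma aff_eq (g : ℝ → ℝ) :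
    ∫ u in Ioo (0:ℝ) 1, g u = ∫ s in Ioo (-1:ℝ) 1, (1/2) * g ((1+s)/2) := by
  have h := integral_image_eq_integral_abs_deriv_smul (s := Ioo (-1) 1)
    (f := fun s : ℝ => (1+s)/2) (f' := fun _ => 1/2) measurableSet_Ioo
    (fun x _ => aff_deriv x _) aff_inj g
  rw [img_aff] at h
  simpa [abs_of_pos] using h

lemma aff_int_iff (g : ℝ → ℝ) :
    IntegrableOn g (Ioo 0 1) ↔ IntegrableOn (fun s => |(1:ℝ)/2| • g ((1+s)/2)) (Ioo (-1:ℝ) 1) := by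
  have h := integrableOn_image_iff_integrableOn_abs_deriv_smul (s := Ioo (-1) 1)
    (f := fun s : ℝ => (1+s)/2) (f' := fun _ => 1/2) measurableSet_Ioo
    (fun x _ => aff_deriv x _) aff_inj g
  rw [img_aff] at h
  exact h

lemma img_sqrt : Real.sqrt '' Ioo 0 1 = Ioo 0 1 := by
  ext u
  constructor
  · rintro ⟨s, ⟨h1, h2⟩, rfl⟩
    exact ⟨Real.sqrt_pos.2 h1, by
      rw [show (1:ℝ) = Real.sqrt 1 by simp]; exact Real.sqrt_lt_sqrt h1.le h2⟩
  · rintro ⟨h1, h2⟩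
    exact ⟨u^2, ⟨by positivity, by nlinarith⟩, Real.sqrt_sq h1.le⟩

lemma sqrt_eq (g : ℝ → ℝ) :
    ∫ u in Ioo (0:ℝ) 1, g u = ∫ v in Ioo (0:ℝ) 1, |1 / (2 * Real.sqrt v)| * g (Real.sqrt v) := by
  have h := integral_image_eq_integral_abs_deriv_smul (s := Ioo 0 1)
    (f := Real.sqrt) (f' := fun v => 1 / (2 * Real.sqrt v)) measurableSet_Ioo
    (fun x hx => (Real.hasDerivAt_sqrt (ne_of_gt hx.1)).hasDerivWithinAt)
    (fun a ha b hb h => by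
      have := congrArg (fun t => t^2) h
      simpa [Real.sq_sqrt ha.1.le, Real.sq_sqrt hb.1.le] using this) g
  rw [img_sqrt] at h
  simpa using h

lemma img_neg : (fun s : ℝ => -s) '' Ioo 0 1 = Ioo (-1) 0 := by
  ext u; constructor
  · rintro ⟨s, ⟨h1, h2⟩, rfl⟩; exact ⟨by simp; linarith, by simp; linarith⟩
  · rintro ⟨h1, h2⟩; exact ⟨-u, ⟨by linarith, by linarith⟩, by ring⟩

lemma neg_eq (g : ℝ → ℝ) :
    ∫ u in Ioo (-1:ℝ) 0, g u = ∫ s in Ioo (0:ℝ) 1, g (-s) := by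
  have h := integral_image_eq_integral_abs_deriv_smul (s := Ioo 0 1)
    (f := fun s : ℝ => -s) (f' := fun _ => -1) measurableSet_Ioo
    (fun x _ => ((hasDerivAt_id x).neg).hasDerivWithinAt)
    (fun a _ b _ h => by dsimp at h; linarith) g
  rw [img_neg] at h
  simpa using h

lemma img_sin : Real.sin '' Ioo (-(π/2)) (π/2) = Ioo (-1) 1 := by
  have hp : (0:ℝ) < π/2 := Real.pi_div_two_pos
  ext u; constructor
  · rintro ⟨θ, ⟨h1, h2⟩, rfl⟩
    constructor
    · have := Real.strictMonoOn_sin (by constructor <;> simp [le_refl, hp.le])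
        ⟨h1.le, h2.le⟩ h1
      rwa [Real.sin_neg, Real.sin_pi_div_two] at this
    · have := Real.strictMonoOn_sin ⟨h1.le, h2.le⟩
        (by constructor <;> simp [le_refl, hp.le]) h2
      rwa [Real.sin_pi_div_two] at this
  · rintro ⟨h1, h2⟩
    exact ⟨Real.arcsin u, ⟨Real.neg_pi_div_two_lt_arcsin.2 h1, Real.arcsin_lt_pi_div_two.2 h2⟩,
      Real.sin_arcsin (by linarith) (by linarith)⟩

lemma sin_eq (g : ℝ → ℝ) :
    ∫ s in Ioo (-1:ℝ) 1, g s = ∫ θ in Ioo (-(π/2)) (π/2), |Real.cos θ| * g (Real.sin θ) := by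
  have h := integral_image_eq_integral_abs_deriv_smul (s := Ioo (-(π/2)) (π/2))
    (f := Real.sin) (f' := Real.cos) measurableSet_Ioo
    (fun x _ => (Real.hasDerivAt_sin x).hasDerivWithinAt)
    (Real.strictMonoOn_sin.injOn.mono (fun x hx => mem_Icc.2 ⟨hx.1.le, hx.2.le⟩)) g
  rw [img_sin] at h
  simpa using h

/- rpow identities -/

lemma four_rpow : (4:ℝ) ^ (-(1:ℝ)/2) = 1/2 := by
  rw [show (-(1:ℝ)/2) = -(1/2) by norm_num, Real.rpow_neg (by norm_num),
    show (4:ℝ) = 2^(2:ℕ) by norm_num, ← Real.rpow_natCast (2:ℝ) 2, ← Real.rpow_mul (by norm_num)]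
  norm_num

lemma W_aff (s : ℝ) (h1 : -1 < s) (h2 : s < 1) :
    W ((1+s)/2) = 2 * (1-s^2) ^ (-(1:ℝ)/2) := by
  have ha : (0:ℝ) < (1+s)/2 := by linarith
  have hb : (0:ℝ) < (1-s)/2 := by linarith
  have hs : (0:ℝ) < 1 - s^2 := by nlinarith
  show ((1+s)/2) ^ (-(1:ℝ)/2) * (1 - (1+s)/2) ^ (-(1:ℝ)/2) = _
  rw [show (1:ℝ) - (1+s)/2 = (1-s)/2 by ring, ← Real.mul_rpow ha.le hb.le,
    show ((1+s)/2) * ((1-s)/2) = (1-s^2)/4 by ring, Real.div_rpow hs.le (by norm_num),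
    four_rpow]
  field_simp

noncomputable def Q (s : ℝ) : ℝ := (1-s^2) ^ (-(1:ℝ)/2)
noncomputable def H (s : ℝ) : ℝ := Q s * Real.log (1-s^2)
noncomputable def G (u : ℝ) : ℝ := W u * Real.log (u*(1-u))
noncomputable def J1 : ℝ := ∫ u in Ioo (0:ℝ) 1, W u * Real.log u

lemma cos_rpow (θ : ℝ) (h : θ ∈ Ioo (-(π/2)) (π/2)) :
    |Real.cos θ| * Q (Real.sin θ) = 1 := by
  have hc : 0 < Real.cos θ := Real.cos_pos_of_mem_Ioo h
  show |Real.cos θ| * (1 - Real.sin θ ^ 2) ^ (-(1:ℝ)/2) = 1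
  rw [← Real.cos_sq', abs_of_pos hc, show Real.cos θ ^ 2 = Real.cos θ ^ (2:ℕ) from rfl,
    ← Real.rpow_natCast, ← Real.rpow_mul hc.le]
  norm_num
  rw [Real.rpow_neg_one, mul_inv_cancel₀ hc.ne']

lemma sqrt_fac (v : ℝ) (hv : 0 < v) : |1 / (2 * Real.sqrt v)| = (1/2) * v ^ (-(1:ℝ)/2) := by
  have hs : 0 < Real.sqrt v := Real.sqrt_pos.2 hv
  rw [abs_of_pos (by positivity), Real.sqrt_eq_rpow, one_div, mul_inv,
    show (-(1:ℝ)/2) = -(1/2) by norm_num, Real.rpow_neg hv.le, one_div]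

/- the main computation -/

lemma J2_eq : (∫ u in Ioo (0:ℝ) 1, W u * Real.log (1-u)) = J1 := by
  rw [show J1 = ∫ u in Ioo (0:ℝ) 1, W u * Real.log u from rfl,
    refl_eq (fun u => W u * Real.log u)]
  apply setIntegral_congr_fun measurableSet_Ioo
  intro u _
  dsimp only
  rw [show W (1-u) = W u by
    show (1-u) ^ (-(1:ℝ)/2) * (1-(1-u)) ^ (-(1:ℝ)/2) = W u
    rw [show (1:ℝ)-(1-u) = u by ring, W_def]; ring]

lemma G_int : IntegrableOn G (Ioo 0 1) := by
  have hadd : IntegrableOn (fun u => W u * Real.log u + W u * Real.log (1-u)) (Ioo 0 1) :=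
    int_Wlog.add int_Wlog'
  apply IntegrableOn.congr_fun hadd _ measurableSet_Ioo
  intro u ⟨h0, h1⟩
  show W u * Real.log u + W u * Real.log (1-u) = G u
  rw [show G u = W u * Real.log (u*(1-u)) from rfl,
    Real.log_mul h0.ne' (by linarith : (1:ℝ)-u ≠ 0)]
  ring

lemma G_sum : ∫ u in Ioo (0:ℝ) 1, G u = 2 * J1 := by
  have h : ∫ u in Ioo (0:ℝ) 1, G u
      = ∫ u in Ioo (0:ℝ) 1, (W u * Real.log u + W u * Real.log (1-u)) := by
    apply setIntegral_congr_fun measurableSet_Ioo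
    intro u ⟨h0, h1⟩
    show G u = _
    rw [show G u = W u * Real.log (u*(1-u)) from rfl,
      Real.log_mul h0.ne' (by linarith : (1:ℝ)-u ≠ 0)]
    ring
  rw [h, integral_add int_Wlog int_Wlog', J2_eq]
  rw [show (∫ u in Ioo (0:ℝ) 1, W u * Real.log u) = J1 from rfl]
  ring

lemma aff_pointwise (s : ℝ) (hs : s ∈ Ioo (-1:ℝ) 1) :
    (1/2) * G ((1+s)/2) = H s - Real.log 4 * Q s := by
  obtain ⟨h1, h2⟩ := hs
  have hone : (0:ℝ) < 1 - s^2 := by nlinarith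
  show (1/2) * (W ((1+s)/2) * Real.log ((1+s)/2 * (1 - (1+s)/2))) = _
  rw [W_aff s h1 h2, show (1+s)/2 * (1 - (1+s)/2) = (1-s^2)/4 by ring,
    Real.log_div hone.ne' (by norm_num),
    show H s = Q s * Real.log (1-s^2) from rfl, show Q s = (1-s^2) ^ (-(1:ℝ)/2) from rfl]
  ring

lemma int_GH : IntegrableOn (fun s => H s - Real.log 4 * Q s) (Ioo (-1:ℝ) 1) := by
  apply IntegrableOn.congr_fun ((aff_int_iff G).1 G_int) _ measurableSet_Ioo
  intro s hs
  show |(1:ℝ)/2| • G ((1+s)/2) = _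
  rw [abs_of_pos (by norm_num : (0:ℝ) < 1/2), smul_eq_mul, aff_pointwise s hs]

lemma int_Q : IntegrableOn Q (Ioo (-1:ℝ) 1) := by
  apply IntegrableOn.congr_fun ((aff_int_iff W).1 int_W) _ measurableSet_Ioo
  intro s hs
  show |(1:ℝ)/2| • W ((1+s)/2) = Q s
  rw [abs_of_pos (by norm_num : (0:ℝ) < 1/2), smul_eq_mul, W_aff s hs.1 hs.2,
    show Q s = (1-s^2) ^ (-(1:ℝ)/2) from rfl]
  ring

lemma int_H : IntegrableOn H (Ioo (-1:ℝ) 1) := by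
  have hadd : IntegrableOn (fun s => (H s - Real.log 4 * Q s) + Real.log 4 * Q s) (Ioo (-1:ℝ) 1) :=
    int_GH.add (int_Q.const_mul (Real.log 4))
  apply IntegrableOn.congr_fun hadd _ measurableSet_Ioo
  intro s _
  show (H s - Real.log 4 * Q s) + Real.log 4 * Q s = H s
  ring

lemma Q_pi : ∫ s in Ioo (-1:ℝ) 1, Q s = π := by
  rw [sin_eq Q, setIntegral_congr_fun measurableSet_Ioo (fun θ h => cos_rpow θ h)]
  simp only [integral_const, smul_eq_mul, mul_one]
  rw [measureReal_restrict_apply_univ, Real.volume_real_Ioo_of_le (by linarith [Real.pi_pos])]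
  ring

lemma H_even : ∫ s in Ioo (-1:ℝ) 1, H s = 2 * ∫ s in Ioo (0:ℝ) 1, H s := by
  have hsplit : Ioo (-1:ℝ) 1 = Ioo (-1) 0 ∪ Ico 0 1 :=
    (Set.Ioo_union_Ico_eq_Ioo (by norm_num) (by norm_num)).symm
  rw [hsplit, setIntegral_union (by rw [Set.disjoint_left]; rintro a ⟨_, h2⟩ ⟨h3, _⟩; linarith) measurableSet_Ico
    (int_H.mono_set (Set.Ioo_subset_Ioo_right (by norm_num)))
    ((integrableOn_Ico_iff_integrableOn_Ioo (by finiteness)).2 (int_H.mono_set (Set.Ioo_subset_Ioo_left (by norm_num)))),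
    integral_Ico_eq_integral_Ioo, neg_eq H]
  have h : ∀ s ∈ Ioo (0:ℝ) 1, H (-s) = H s := by
    intro s _
    show (1-(-s)^2) ^ (-(1:ℝ)/2) * Real.log (1-(-s)^2) = H s
    rw [neg_sq]; rfl
  rw [setIntegral_congr_fun measurableSet_Ioo h]
  ring

lemma H_half : ∫ s in Ioo (0:ℝ) 1, H s = (1/2) * J1 := by
  rw [sqrt_eq H]
  have h : ∀ v ∈ Ioo (0:ℝ) 1, |1/(2*Real.sqrt v)| * H (Real.sqrt v)
      = (1/2) * (W v * Real.log (1-v)) := by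
    intro v ⟨hv0, hv1⟩
    rw [sqrt_fac v hv0]
    show (1/2) * v ^ (-(1:ℝ)/2) *
      ((1 - Real.sqrt v ^ 2) ^ (-(1:ℝ)/2) * Real.log (1 - Real.sqrt v ^ 2)) = _
    rw [Real.sq_sqrt hv0.le, W_def]
    ring
  rw [setIntegral_congr_fun measurableSet_Ioo h, integral_const_mul, J2_eq]

lemma J1_val : J1 = -(2*π) * Real.log 2 := by
  have key : ∫ u in Ioo (0:ℝ) 1, G u
      = (∫ s in Ioo (-1:ℝ) 1, H s) - Real.log 4 * (∫ s in Ioo (-1:ℝ) 1, Q s) := by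
    rw [aff_eq G, setIntegral_congr_fun measurableSet_Ioo (fun s hs => aff_pointwise s hs),
      integral_sub int_H (int_Q.const_mul _), integral_const_mul]
  rw [G_sum, H_even, H_half, Q_pi] at key
  have hlog : Real.log 4 = 2 * Real.log 2 := by
    rw [show (4:ℝ) = 2^(2:ℕ) by norm_num, Real.log_pow]
    push_cast; ring
  rw [hlog] at key
  linarith

theorem stmt18 (c : ℝ) (x : ℝ) (hx : 0 < x) :
    (1 / Real.Gamma (1/2) ^ 2) *
      (∫ t in (0:ℝ)..x, c * t ^ (-(1:ℝ)/2) * (x - t) ^ (-(1:ℝ)/2) * Real.log (t / x))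
      = -2 * c * Real.log 2 := by
  have himg : (fun u : ℝ => x*u) '' Ioo 0 1 = Ioo 0 x := by
    have h := Set.image_mul_left_Ioo hx (0:ℝ) 1
    simpa using h
  have hsub := integral_image_eq_integral_abs_deriv_smul (s := Ioo 0 1)
    (f := fun u : ℝ => x*u) (f' := fun _ => x) measurableSet_Ioo
    (fun u _ => by simpa using ((hasDerivAt_id u).const_mul x).hasDerivWithinAt)
    (fun a _ b _ h => by dsimp at h; exact mul_left_cancel₀ hx.ne' h)
    (fun t => c * t ^ (-(1:ℝ)/2) * (x - t) ^ (-(1:ℝ)/2) * Real.log (t / x))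
  rw [himg] at hsub
  rw [intervalIntegral.integral_of_le hx.le, integral_Ioc_eq_integral_Ioo, hsub]
  have hpt : ∀ u ∈ Ioo (0:ℝ) 1,
      |x| • (c * (x*u) ^ (-(1:ℝ)/2) * (x - x*u) ^ (-(1:ℝ)/2) * Real.log ((x*u)/x))
      = c * (W u * Real.log u) := by
    intro u ⟨h0, h1⟩
    have h1u : (0:ℝ) ≤ 1 - u := by linarith
    rw [smul_eq_mul, abs_of_pos hx, show x - x*u = x*(1-u) by ring,
      Real.mul_rpow hx.le h0.le, Real.mul_rpow hx.le h1u,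
      mul_div_cancel_left₀ _ hx.ne']
    have hxx : x ^ (-(1:ℝ)/2) * x ^ (-(1:ℝ)/2) = x⁻¹ := by
      rw [← Real.rpow_add hx, show (-(1:ℝ)/2 + -(1:ℝ)/2) = -1 by norm_num, Real.rpow_neg_one]
    have e : x * (c * (x ^ (-(1:ℝ)/2) * u ^ (-(1:ℝ)/2)) * (x ^ (-(1:ℝ)/2) * (1-u) ^ (-(1:ℝ)/2))
        * Real.log u)
        = (x * (x ^ (-(1:ℝ)/2) * x ^ (-(1:ℝ)/2))) * (c * (W u * Real.log u)) := by
      rw [W_def]; ring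
    rw [e, hxx, mul_inv_cancel₀ hx.ne', one_mul]
  rw [setIntegral_congr_fun measurableSet_Ioo hpt, integral_const_mul,
    show (∫ u in Ioo (0:ℝ) 1, W u * Real.log u) = J1 from rfl, J1_val,
    Real.Gamma_one_half_eq, Real.sq_sqrt Real.pi_pos.le]
  field_simp
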